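/- If a finite binary word W is not balanced, then there exists a palindrome U such that both aUa and bUb are factors of W. -/

import Mathlib

open List

variable {α : Type*} [DecidableEq α]

/-- The set of factors (contiguous subwords) of `W`. -/
def factorFinset (W : List α) : Finset (List α) := (W.inits.flatMap List.tails).toFinset

/-- A palindrome is a word equal to its reversal. -/
def Pal (u : List α) : Prop := u.reverse = u

instance : DecidablePred (Pal : List α → Prop) :=
  fun u => inferInstanceAs (Decidable (u.reverse = u))

/-- The set of palindromic factors of `W` (including the empty word). -/
def palFactorFinset (W : List α) : Finset (List α) := (factorFinset W).filter Pal

/-- Subword complexity: the number of distinct factors of `W` of length `n`. -/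
def C (W : List α) (n : ℕ) : ℕ := ((factorFinset W).filter (fun u => u.length = n)).card

/-- Palindromic complexity: number of distinct palindromic factors of `W` of length `n`. -/
def P (W : List α) (n : ℕ) : ℕ := ((palFactorFinset W).filter (fun u => u.length = n)).card

/-- A word is rich if it has exactly `|W| + 1` distinct palindromic factors. -/
def Rich (W : List α) : Prop := (palFactorFinset W).card = W.length + 1

/-- Number of occurrences of `u` as a factor of `W`. -/
def occ (u W : List α) : ℕ := ((List.range (W.length + 1)).filter (fun i => u <+: W.drop i)).length

/-- `Z` is a complete return to `u` in `W`: a factor of `W` with exactly two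
occurrences of `u`, one as a prefix and one as a suffix. -/
def CompleteReturn (u Z W : List α) : Prop := Z <:+: W ∧ u <+: Z ∧ u <:+ Z ∧ occ u Z = 2

/-- `u` is a right special factor of `W`. -/
def RightSpecial (u W : List α) : Prop :=
  ∃ x y : α, x ≠ y ∧ (u ++ [x]) <:+: W ∧ (u ++ [y]) <:+: W

/-- `R_W`: the smallest `p` such that `W` has no right special factor of length `p`. -/
noncomputable def RW (W : List α) : ℕ := sInf {p : ℕ | ∀ u : List α, u.length = p → ¬ RightSpecial u W}

/-- `K_W`: the length of the shortest suffix of `W` occurring exactly once in `W`. -/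
noncomputable def KW (W : List α) : ℕ := sInf {k : ℕ | ∃ u : List α, u <:+ W ∧ u.length = k ∧ occ u W = 1}

/-- A word is trapezoidal if `|W| = R_W + K_W`. -/
def Trapezoidal (W : List α) : Prop := W.length = RW W + KW W

/-- The minimal period of `W`. -/
noncomputable def minPeriod (W : List α) : ℕ :=
  sInf {q : ℕ | 0 < q ∧ ∀ i : ℕ, i + q < W.length → W[i]? = W[i + q]?}

/-- A binary word is balanced if the number of occurrences of a letter in two
factors of equal length differ by at most 1. -/
def BalancedWord (W : List Bool) : Prop :=
  ∀ u v : List Bool, u <:+: W → v <:+: W → u.length = v.length →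
    u.count true ≤ v.count true + 1

private lemma decomp2 {α : Type*} (l : List α) (h : 2 ≤ l.length) :
    ∃ a M b, l = a :: (M ++ [b]) := by
  match l, h with
  | a :: (x :: xs), _ =>
    refine ⟨a, (x :: xs).dropLast, (x :: xs).getLast (by simp), ?_⟩
    rw [List.dropLast_append_getLast]

private lemma cnt_cons (b : Bool) (L : List Bool) :
    (b :: L).count true = b.toNat + L.count true := by
  cases b <;> simp [List.count_cons] <;> omega

private lemma cnt_app (b : Bool) (L : List Bool) :
    (L ++ [b]).count true = L.count true + b.toNat := by
  cases b <;> simp [List.count_append, List.count_cons]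

theorem stmt14 (W : List Bool) (h : ¬ BalancedWord W) :
    ∃ U : List Bool, Pal U ∧
      (true :: (U ++ [true])) <:+: W ∧ (false :: (U ++ [false])) <:+: W := by
  classical
  set S : Set ℕ := {n | ∃ u v : List Bool, u <:+: W ∧ v <:+: W ∧ u.length = n ∧ v.length = n ∧
    v.count true + 2 ≤ u.count true} with hSdef
  have hSne : S.Nonempty := by
    rw [BalancedWord] at h
    push_neg at h
    obtain ⟨u, v, hu, hv, hl, hc⟩ := h
    exact ⟨u.length, u, v, hu, hv, rfl, hl.symm, by omega⟩
  set n := sInf S with hn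
  obtain ⟨u, v, hu, hv, hul, hvl, hcnt⟩ := Nat.sInf_mem hSne
  have hmin : ∀ x y : List Bool, x <:+: W → y <:+: W → x.length = y.length →
      x.length < n → x.count true ≤ y.count true + 1 := by
    intro x y hx hy hxy hlt
    by_contra hc
    have hmem : x.length ∈ S := ⟨x, y, hx, hy, rfl, hxy.symm, by omega⟩
    exact absurd (Nat.sInf_le hmem) (by omega)
  have hn2 : 2 ≤ n := by
    have h1 := List.count_le_length (a := true) (l := u)
    have h2 := List.count_le_length (a := true) (l := v)
    omega
  obtain ⟨a, M, bu, hudef⟩ := decomp2 u (by omega)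
  obtain ⟨c, N, bv, hvdef⟩ := decomp2 v (by omega)
  subst hudef hvdef
  have hMl : M.length + 2 = n := by simp at hul; omega
  have hNl : N.length + 2 = n := by simp at hvl; omega
  -- determine the four border letters
  have habu : a = true ∧ bu = true ∧ c = false ∧ bv = false := by
    have t1 : (M ++ [bu]).count true ≤ (N ++ [bv]).count true + 1 :=
      hmin _ _ ((List.suffix_cons a _).isInfix.trans hu)
        ((List.suffix_cons c _).isInfix.trans hv) (by simp; omega) (by simp; omega)
    have t2 : (a :: M).count true ≤ (c :: N).count true + 1 :=
      hmin _ _ ((List.prefix_append (a :: M) [bu]).isInfix.trans (by simpa using hu))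
        ((List.prefix_append (c :: N) [bv]).isInfix.trans (by simpa using hv))
        (by simp; omega) (by simp; omega)
    simp only [cnt_cons, cnt_app] at hcnt t1 t2
    cases a <;> cases bu <;> cases c <;> cases bv <;>
      simp only [Bool.toNat_true, Bool.toNat_false] at hcnt t1 t2 <;>
      first
      | exact ⟨rfl, rfl, rfl, rfl⟩
      | omega
  obtain ⟨rfl, rfl, rfl, rfl⟩ := habu
  simp only [cnt_cons, cnt_app, Bool.toNat_true, Bool.toNat_false] at hcnt
  have hMN : N.count true ≤ M.count true := by omega
  have hlen : N.length = M.length := by omega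
  have hMeqN : M = N := by
    by_contra hne
    have hex : ∃ j : ℕ, M[j]? ≠ N[j]? := by
      by_contra hall
      push_neg at hall
      exact hne (List.ext_getElem? hall)
    set j := Nat.find hex with hjdef
    have hj : M[j]? ≠ N[j]? := Nat.find_spec hex
    have hjmin : ∀ i, i < j → M[i]? = N[i]? := fun i hi => by
      have := Nat.find_min hex hi
      simpa using this
    have hjm : j < M.length := by
      by_contra hge
      push_neg at hge
      rw [List.getElem?_eq_none hge, List.getElem?_eq_none (by omega)] at hj
      exact hj rfl
    have hjn : j < N.length := by omega
    have htake : M.take j = N.take j := by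
      apply List.ext_getElem?
      intro i
      simp only [List.getElem?_take]
      split
      · exact hjmin i ‹_›
      · rfl
    have hct : (M.take j).count true = (N.take j).count true := by rw [htake]
    rw [List.getElem?_eq_getElem hjm, List.getElem?_eq_getElem hjn] at hj
    have hjv : M[j] ≠ N[j] := fun hh => hj (by rw [hh])
    have htsM : M.take (j + 1) = M.take j ++ [M[j]] := by
      rw [List.take_succ, List.getElem?_eq_getElem hjm]
      rfl
    have htsN : N.take (j + 1) = N.take j ++ [N[j]] := by
      rw [List.take_succ, List.getElem?_eq_getElem hjn]
      rfl
    have hdM : (M.take (j+1)).count true + (M.drop (j+1)).count true = M.count true := by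
      rw [← List.count_append, List.take_append_drop]
    have hdN : (N.take (j+1)).count true + (N.drop (j+1)).count true = N.count true := by
      rw [← List.count_append, List.take_append_drop]
    by_cases hMj : M[j] = true
    · -- N[j] = false; compare prefixes
      have hNj : N[j] = false := by
        cases hN : N[j]
        · rfl
        · exact absurd (hMj.trans hN.symm) hjv
      have t : (true :: M.take (j+1)).count true ≤ (false :: N.take (j+1)).count true + 1 := by
        refine hmin _ _ ?_ ?_ (by simp; omega) (by simp; omega)
        · exact (List.cons_prefix_cons.mpr ⟨rfl,
            (M.take_prefix (j+1)).trans (M.prefix_append [true])⟩).isInfix.trans hu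
        · exact (List.cons_prefix_cons.mpr ⟨rfl,
            (N.take_prefix (j+1)).trans (N.prefix_append [false])⟩).isInfix.trans hv
      rw [cnt_cons, cnt_cons, htsM, htsN, hMj, hNj, cnt_app, cnt_app] at t
      simp only [Bool.toNat_true, Bool.toNat_false] at t
      omega
    · -- M[j] = false, N[j] = true; compare suffixes
      have hMj' : M[j] = false := by
        cases hM : M[j]
        · rfl
        · exact absurd hM hMj
      have hNj : N[j] = true := by
        cases hN : N[j]
        · exact absurd (hMj'.trans hN.symm) hjv
        · rfl
      have hxs : (M.drop (j+1) ++ [true]) <:+ (true :: (M ++ [true])) :=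
        ⟨true :: M.take (j+1), by
          simp only [cons_append, ← List.append_assoc, List.take_append_drop]⟩
      have hys : (N.drop (j+1) ++ [false]) <:+ (false :: (N ++ [false])) :=
        ⟨false :: N.take (j+1), by
          simp only [cons_append, ← List.append_assoc, List.take_append_drop]⟩
      have t : (M.drop (j+1) ++ [true]).count true ≤ (N.drop (j+1) ++ [false]).count true + 1 := by
        refine hmin _ _ (hxs.isInfix.trans hu) (hys.isInfix.trans hv) (by simp; omega)
          (by simp; omega)
      rw [cnt_app, cnt_app] at t
      rw [htsM, hMj', cnt_app] at hdM
      rw [htsN, hNj, cnt_app] at hdN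
      simp only [Bool.toNat_true, Bool.toNat_false] at t hdM hdN
      omega
  subst hMeqN
  -- M is a palindrome
  have hpal : ∀ i : ℕ, i < M.length → M[i]? = M[M.length - 1 - i]? := by
    by_contra hnp
    push_neg at hnp
    have hex : ∃ i : ℕ, i < M.length ∧ M[i]? ≠ M[M.length - 1 - i]? := hnp
    set j := Nat.find hex with hjdef
    obtain ⟨hjm, hj⟩ := Nat.find_spec hex
    have hjmin : ∀ i, i < j → i < M.length → M[i]? = M[M.length - 1 - i]? := by
      intro i hi him
      have := Nat.find_min hex hi
      push_neg at this
      exact this him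
    set k := M.length - 1 - j with hkdef
    have hjk : j < k := by
      rcases lt_trichotomy j k with hlt | heq | hgt
      · exact hlt
      · exact absurd (heq ▸ rfl) hj
      · exfalso
        have hkm : k < M.length := by omega
        have h1 := hjmin k hgt hkm
        have h2 : M.length - 1 - k = j := by omega
        rw [h2] at h1
        exact hj h1.symm
    have hkm : k < M.length := by omega
    -- the prefix of length j equals the reverse of the suffix after position k
    have hrev : M.take j = (M.drop (k+1)).reverse := by
      have hdl : (M.drop (k+1)).length = j := by simp; omega
      apply List.ext_getElem?
      intro i
      by_cases hi : i < j
      · rw [List.getElem?_take, if_pos hi, List.getElem?_reverse (by omega : i < (M.drop (k+1)).length),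
          hdl, List.getElem?_drop]
        have hidx : k + 1 + (j - 1 - i) = M.length - 1 - i := by omega
        rw [hidx]
        exact hjmin i hi (by omega)
      · rw [List.getElem?_take, if_neg hi, List.getElem?_eq_none (by rw [List.length_reverse]; omega)]
    have hcrev : (M.drop (k+1)).count true = (M.take j).count true := by
      rw [hrev, List.count_reverse]
    have hdropk : M.drop k = M[k] :: M.drop (k+1) := List.drop_eq_getElem_cons hkm
    have htsM : M.take (j + 1) = M.take j ++ [M[j]] := by
      rw [List.take_succ, List.getElem?_eq_getElem hjm]
      rfl
    rw [List.getElem?_eq_getElem hjm, List.getElem?_eq_getElem (by omega : M.length - 1 - j < M.length)] at hj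
    have hjv : M[j] ≠ M[M.length - 1 - j] := fun hh => hj (by rw [hh])
    have hkv : M[k] = M[M.length - 1 - j] := getElem_congr_idx hkdef
    by_cases hMj : M[j] = true
    · have hMk : M[k] = false := by
        rw [hkv]
        cases hN : M[M.length - 1 - j]
        · rfl
        · exact absurd (hMj.trans hN.symm) hjv
      have t : (true :: M.take (j+1)).count true ≤ (M.drop k ++ [false]).count true + 1 := by
        refine hmin _ _ ?_ ?_ ?_ ?_
        · exact (List.cons_prefix_cons.mpr ⟨rfl,
            (M.take_prefix (j+1)).trans (M.prefix_append [true])⟩).isInfix.trans hu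
        · refine (IsSuffix.isInfix ⟨false :: M.take k, ?_⟩).trans hv
          simp only [cons_append, ← List.append_assoc, List.take_append_drop]
        · simp; omega
        · simp; omega
      rw [cnt_cons, htsM, hMj, cnt_app, cnt_app, hdropk, hMk, cnt_cons, hcrev] at t
      simp only [Bool.toNat_true, Bool.toNat_false] at t
      omega
    · have hMj' : M[j] = false := by
        cases hM : M[j]
        · rfl
        · exact absurd hM hMj
      have hMk : M[k] = true := by
        rw [hkv]
        cases hN : M[M.length - 1 - j]
        · exact absurd (hMj'.trans hN.symm) hjv
        · rfl
      have t : (M.drop k ++ [true]).count true ≤ (false :: M.take (j+1)).count true + 1 := by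
        refine hmin _ _ ?_ ?_ ?_ ?_
        · refine (IsSuffix.isInfix ⟨true :: M.take k, ?_⟩).trans hu
          simp only [cons_append, ← List.append_assoc, List.take_append_drop]
        · exact (List.cons_prefix_cons.mpr ⟨rfl,
            (M.take_prefix (j+1)).trans (M.prefix_append [false])⟩).isInfix.trans hv
        · simp; omega
        · simp; omega
      rw [cnt_cons, htsM, hMj', cnt_app, cnt_app, hdropk, hMk, cnt_cons, hcrev] at t
      simp only [Bool.toNat_true, Bool.toNat_false] at t
      omega
  refine ⟨M, ?_, hu, hv⟩
  apply List.ext_getElem?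
  intro i
  by_cases hi : i < M.length
  · rw [List.getElem?_reverse (by simpa using hi)]
    exact (hpal i hi).symm
  · rw [List.getElem?_eq_none (by simpa using not_lt.mp hi),
      List.getElem?_eq_none (not_lt.mp hi)]
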